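/- Let T be a compact Hausdorff space, F a Hilbert space, and η : T → F a map (not assumed continuous) such that the map T → K(F), t ↦ η(t)⟨·,η(t)⟩, is continuous for the operator norm. Let t₀ ∈ T with η(t₀) ≠ 0, put U := {t ∈ T : ⟨η(t₀), η(t)⟩ ≠ 0}, and define ξ : U → F by ξ(t) := (⟨η(t₀),η(t)⟩ / |⟨η(t₀),η(t)⟩|)·η(t). Then U is an open neighbourhood of t₀, ξ is continuous on U, ξ(t₀) = η(t₀), and ξ(t)⟨·,ξ(t)⟩ = η(t)⟨·,η(t)⟩ for all t ∈ U. -/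

import Mathlib

noncomputable section

/-- rank one operator `z ↦ ⟨z, y⟩ • x` (inner product linear in the first variable). -/
def rankOne {F : Type*} [NormedAddCommGroup F] [InnerProductSpace ℂ F] (x y : F) :
    F →L[ℂ] F :=
  (ContinuousLinearMap.toSpanSingleton ℂ x).comp ((innerSL ℂ) y)

/-- Local continuous choice of a vector implementing a continuous family
of rank one projections-like operators. -/
theorem stmt10 {T F : Type*} [TopologicalSpace T] [CompactSpace T] [T2Space T]
    [NormedAddCommGroup F] [InnerProductSpace ℂ F]
    (η : T → F)
    (hcont : Continuous fun t => rankOne (η t) (η t))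
    (t₀ : T) (h₀ : η t₀ ≠ 0) :
    IsOpen {t : T | (inner ℂ (η t) (η t₀) : ℂ) ≠ 0} ∧
    t₀ ∈ {t : T | (inner ℂ (η t) (η t₀) : ℂ) ≠ 0} ∧
    ContinuousOn (fun t => ((inner ℂ (η t) (η t₀) : ℂ) / (‖(inner ℂ (η t) (η t₀) : ℂ)‖ : ℂ)) • η t)
      {t : T | (inner ℂ (η t) (η t₀) : ℂ) ≠ 0} ∧
    ((inner ℂ (η t₀) (η t₀) : ℂ) / (‖(inner ℂ (η t₀) (η t₀) : ℂ)‖ : ℂ)) • η t₀ = η t₀ ∧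
    ∀ t ∈ {t : T | (inner ℂ (η t) (η t₀) : ℂ) ≠ 0},
      rankOne (((inner ℂ (η t) (η t₀) : ℂ) / (‖(inner ℂ (η t) (η t₀) : ℂ)‖ : ℂ)) • η t)
        (((inner ℂ (η t) (η t₀) : ℂ) / (‖(inner ℂ (η t) (η t₀) : ℂ)‖ : ℂ)) • η t)
      = rankOne (η t) (η t) := by
  set c : T → ℂ := fun t => inner ℂ (η t) (η t₀) with hc
  -- f t = c t • η t, continuous
  have hf : Continuous fun t => (c t) • η t := by
    have : Continuous fun t => rankOne (η t) (η t) (η t₀) :=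
      (ContinuousLinearMap.apply ℂ F (η t₀)).continuous.comp hcont
    simpa [rankOne, ContinuousLinearMap.toSpanSingleton_apply] using this
  -- g t = ‖c t‖ ^ 2 as complex, continuous
  have hg : Continuous fun t => (inner ℂ (η t₀) ((c t) • η t) : ℂ) :=
    (Continuous.inner continuous_const hf)
  have hgval : ∀ t, (inner ℂ (η t₀) ((c t) • η t) : ℂ) = (‖c t‖ ^ 2 : ℝ) := by
    intro t
    rw [inner_smul_right]
    rw [show (inner ℂ (η t₀) (η t) : ℂ) = starRingEnd ℂ (c t) from (inner_conj_symm _ _).symm]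
    rw [Complex.mul_conj']
    push_cast [Complex.sq_norm]
    simp [Complex.normSq_eq_norm_sq]
  have hnorm : Continuous fun t => (‖c t‖ : ℝ) := by
    have h1 : Continuous fun t => (‖c t‖ ^ 2 : ℝ) := by
      have := Complex.continuous_re.comp hg
      exact this.congr fun t => by
        simp only [Function.comp_apply, hgval t, ← Complex.ofReal_pow, Complex.ofReal_re]
    have : Continuous fun t => Real.sqrt (‖c t‖ ^ 2) :=
      Real.continuous_sqrt.comp h1
    simpa [Real.sqrt_sq (norm_nonneg _)] using this
  have hopen : IsOpen {t : T | c t ≠ 0} := by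
    have : {t : T | c t ≠ 0} = (fun t => (‖c t‖ : ℝ)) ⁻¹' {0}ᶜ := by
      ext t; simp [norm_eq_zero]
    rw [this]
    exact isOpen_compl_singleton.preimage hnorm
  have hmem : t₀ ∈ {t : T | c t ≠ 0} := by
    simpa [hc] using (inner_self_ne_zero (𝕜 := ℂ)).mpr h₀
  refine ⟨hopen, hmem, ?_, ?_, ?_⟩
  · -- continuity of ξ
    have : ContinuousOn (fun t => ((‖c t‖ : ℂ))⁻¹ • ((c t) • η t)) {t : T | c t ≠ 0} := by
      apply ContinuousOn.smul
      · apply ContinuousOn.inv₀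
        · exact (Complex.continuous_ofReal.comp hnorm).continuousOn
        · intro t ht
          simpa [Complex.ofReal_eq_zero, norm_eq_zero] using ht
      · exact hf.continuousOn
    refine this.congr fun t ht => ?_
    beta_reduce
    rw [smul_smul, div_eq_inv_mul]
  · -- ξ t₀ = η t₀
    have h1 : (inner ℂ (η t₀) (η t₀) : ℂ) = ((‖η t₀‖ ^ 2 : ℝ) : ℂ) := by
      rw [inner_self_eq_norm_sq_to_K]; norm_cast
    rw [h1]
    have h2 : ‖((‖η t₀‖ ^ 2 : ℝ) : ℂ)‖ = (‖η t₀‖ ^ 2 : ℝ) := by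
      rw [Complex.norm_real, Real.norm_eq_abs, abs_of_nonneg (sq_nonneg _)]
    rw [h2]
    rw [div_self (by simpa using pow_ne_zero 2 (norm_ne_zero_iff.mpr h₀))]
    simp
  · -- rankOne equality
    intro t ht
    set a : ℂ := c t / (‖c t‖ : ℂ) with ha
    have hnorma : ‖a‖ = 1 := by
      rw [ha, norm_div, Complex.norm_real, Real.norm_eq_abs,
        abs_of_nonneg (norm_nonneg _), div_self (norm_ne_zero_iff.mpr ht)]
    ext z
    simp only [rankOne, ContinuousLinearMap.coe_comp', Function.comp_apply, innerSL_apply_apply,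
      ContinuousLinearMap.toSpanSingleton_apply, inner_smul_left]
    have h1 : (starRingEnd ℂ) a * a = 1 := by
      rw [mul_comm, Complex.mul_conj, Complex.normSq_eq_norm_sq, hnorma]
      norm_num
    rw [smul_smul, mul_right_comm, h1, one_mul]

end
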